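/- In a linearly separable affective interaction with I − J invertible, an action profile x* is a Nash equilibrium of the induced game U(x) = (I − J)^{-1} f(x) if and only if (x*, U(x*)) is a parametric equilibrium of V, provided I − J is a P-matrix (so the diagonal of (I − J)^{-1} is positive). -/

import Mathlib

/-- A square real matrix is a P-matrix if all of its principal minors are positive. -/
def IsPMatrix {n : ℕ} (A : Matrix (Fin n) (Fin n) ℝ) : Prop :=
  ∀ S : Finset (Fin n), S.Nonempty →
    0 < (A.submatrix (fun i : S => (i : Fin n)) (fun j : S => (j : Fin n))).det

lemma adj_diag_pos {n : ℕ} (A : Matrix (Fin (n+1)) (Fin (n+1)) ℝ) (hP : IsPMatrix A)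
    (i : Fin (n+1)) : 0 < A⁻¹ i i := by
  have hdet : 0 < A.det := by
    have := hP Finset.univ ⟨i, Finset.mem_univ i⟩
    have he : (A.submatrix (fun i : (Finset.univ : Finset (Fin (n+1))) => (i : Fin (n+1)))
        (fun j : (Finset.univ : Finset (Fin (n+1))) => (j : Fin (n+1)))).det = A.det := by
      exact Matrix.det_submatrix_equiv_self (Equiv.subtypeUnivEquiv Finset.mem_univ) A
    rwa [he] at this
  have hadj : 0 < A.adjugate i i := by
    rw [Matrix.adjugate_fin_succ_eq_det_submatrix]
    cases n with
    | zero => simp [Matrix.det_fin_zero]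
    | succ m =>
      rw [Even.neg_one_pow ⟨(i:ℕ), rfl⟩, one_mul]
      have key := hP (Finset.univ.erase i) ?_
      · set S := Finset.univ.erase i with hS
        have he : ∀ k : Fin (m+1), i.succAbove k ∈ S := fun k =>
          Finset.mem_erase.2 ⟨Fin.succAbove_ne i k, Finset.mem_univ _⟩
        have hbij : Function.Bijective (fun k : Fin (m+1) => (⟨i.succAbove k, he k⟩ : S)) := by
          constructor
          · intro a b hab
            exact (Fin.succAbove_right_injective (p := i)) (congrArg Subtype.val hab)
          · rintro ⟨j, hj⟩
            obtain ⟨k, hk⟩ := Fin.exists_succAbove_eq (Finset.mem_erase.1 hj).1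
            exact ⟨k, Subtype.ext hk⟩
        have := Matrix.det_submatrix_equiv_self (Equiv.ofBijective _ hbij)
          (A.submatrix (fun i : S => (i : Fin (m+2))) (fun j : S => (j : Fin (m+2))))
        rw [← this] at key
        simpa [Matrix.submatrix_submatrix, Function.comp_def] using key
      · exact ⟨i.succAbove 0, Finset.mem_erase.2 ⟨Fin.succAbove_ne i 0, Finset.mem_univ _⟩⟩
  rw [Matrix.inv_def]
  simp only [Matrix.smul_apply, smul_eq_mul, Ring.inverse_eq_inv']
  positivity

/-- In a linearly separable affective interaction with I − J a P-matrix, x* is a Nash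
equilibrium of the induced game U(x) = (I−J)⁻¹ f(x) iff (x*, U(x*)) is a parametric
equilibrium of V_i(x_i,u) = f_i(x_i) + Σ_{j≠i} J_{ij} u_j. -/
theorem nash_iff_parametric_linear {n : ℕ} (J : Matrix (Fin n) (Fin n) ℝ)
    (hdiag : ∀ i, J i i = 0) (hunit : IsUnit (1 - J).det) (hP : IsPMatrix (1 - J))
    (X : Fin n → Type*) (f : ∀ i, X i → ℝ) (xs : ∀ i, X i) :
    (∀ (i : Fin n) (xi : X i),
        (1 - J)⁻¹.mulVec (fun j => f j (Function.update xs i xi j)) i ≤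
          (1 - J)⁻¹.mulVec (fun j => f j (xs j)) i) ↔
      (∀ (i : Fin n) (xi : X i),
        f i xi + ∑ j ∈ Finset.univ.erase i,
            J i j * (1 - J)⁻¹.mulVec (fun k => f k (xs k)) j ≤
          f i (xs i) + ∑ j ∈ Finset.univ.erase i,
            J i j * (1 - J)⁻¹.mulVec (fun k => f k (xs k)) j) := by
  have key : ∀ (i : Fin n) (xi : X i),
      (1 - J)⁻¹.mulVec (fun j => f j (Function.update xs i xi j)) i
        = (1 - J)⁻¹.mulVec (fun j => f j (xs j)) i
          + (1 - J)⁻¹ i i * (f i xi - f i (xs i)) := by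
    intro i xi
    have hg : (fun j => f j (Function.update xs i xi j))
        = (fun j => f j (xs j)) + (f i xi - f i (xs i)) • (Pi.single i 1 : Fin n → ℝ) := by
      funext j
      by_cases h : j = i
      · subst h; simp
      · simp [Function.update_of_ne h, Pi.single_eq_of_ne h]
    rw [hg, Matrix.mulVec_add, Matrix.mulVec_smul, Pi.add_apply, Pi.smul_apply,
      Matrix.mulVec_single]
    simp only [smul_eq_mul, Pi.smul_apply, MulOpposite.op_one, one_smul, Matrix.col_apply]; ring
  have hb : ∀ i : Fin n, 0 < (1 - J)⁻¹ i i := by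
    intro i
    cases n with
    | zero => exact i.elim0
    | succ m => exact adj_diag_pos _ hP i
  constructor
  · intro h i xi
    have := h i xi
    rw [key] at this
    have hd : f i xi - f i (xs i) ≤ 0 := by nlinarith [hb i]
    have : f i xi ≤ f i (xs i) := by linarith
    exact add_le_add_left this _
  · intro h i xi
    have hle : f i xi ≤ f i (xs i) := le_of_add_le_add_right (h i xi)
    rw [key]
    nlinarith [hb i]
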